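/- For positive integers a, b, the expression a⁴ + 6a²b² + b⁴ is never a perfect square. -/

import Mathlib

lemma cast4 (m : ℤ) : ((m.natAbs : ℤ)) ^ 4 = m ^ 4 := by
  rw [← Int.abs_eq_natAbs, ← abs_pow, abs_of_nonneg (by positivity)]

lemma cast2 (m : ℤ) : ((m.natAbs : ℤ)) ^ 2 = m ^ 2 := by
  rw [← Int.abs_eq_natAbs, ← abs_pow, abs_of_nonneg (by positivity)]

lemma natAbs_lt_of_sq_lt {m x : ℤ} (h : m ^ 2 < x ^ 2) : m.natAbs < x.natAbs := by
  have h1 : (m ^ 2).natAbs < (x ^ 2).natAbs :=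
    Int.natAbs_lt_natAbs_of_nonneg_of_lt (sq_nonneg m) h
  rw [Int.natAbs_pow, Int.natAbs_pow] at h1
  exact lt_of_pow_lt_pow_left₀ 2 (Nat.zero_le _) h1

lemma desc (x O u : ℤ) (hO2 : O % 2 = 1) (hcop : Int.gcd O (2 * u ^ 2) = 1)
    (hu : u ≠ 0) (hx : 0 < x) (heq : O ^ 2 + (2 * u ^ 2) ^ 2 = x ^ 2) :
    ∃ r s : ℤ, s ≠ 0 ∧ O = r ^ 4 - s ^ 4 ∧ r.natAbs < x.natAbs := by
  have ht : PythagoreanTriple O (2 * u ^ 2) x := by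
    delta PythagoreanTriple; linear_combination heq
  obtain ⟨p, q, hO, hE, hX, hpq, hpar, hp⟩ := ht.coprime_classification' hcop hO2 hx
  have hpq' : p * q = u ^ 2 := by
    apply mul_left_cancel₀ (two_ne_zero (α := ℤ))
    linear_combination -hE
  have hppos : 0 < p := by
    rcases lt_or_eq_of_le hp with h | h
    · exact h
    · exfalso; apply hu
      have : u ^ 2 = 0 := by rw [← hpq', ← h]; ring
      exact pow_eq_zero_iff two_ne_zero |>.mp this
  have hqpos : 0 < q := by
    have h2 : 0 < p * q := by rw [hpq']; positivity
    rcases mul_pos_iff.mp h2 with ⟨_, h⟩ | ⟨h, _⟩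
    · exact h
    · linarith
  obtain ⟨r, hr⟩ := Int.sq_of_gcd_eq_one hpq hpq'
  replace hr : p = r ^ 2 := by
    rcases hr with h | h
    · exact h
    · exfalso; nlinarith [sq_nonneg r]
  obtain ⟨s, hs⟩ := Int.sq_of_gcd_eq_one (Int.gcd_comm p q ▸ hpq) (by linarith [hpq'] : q * p = u ^ 2)
  replace hs : q = s ^ 2 := by
    rcases hs with h | h
    · exact h
    · exfalso; nlinarith [sq_nonneg s]
  refine ⟨r, s, ?_, ?_, ?_⟩
  · intro h; rw [h] at hs; simp at hs; omega
  · rw [hO, hr, hs]; ring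
  · apply natAbs_lt_of_sq_lt
    have h1 : r ^ 2 ≤ r ^ 4 := by nlinarith [sq_nonneg (r^2 - 1), sq_nonneg r]
    nlinarith [sq_nonneg q, sq_nonneg (r^2)]

set_option maxHeartbeats 1600000 in
theorem no_flt42sub : ∀ n : ℕ, ∀ x y z : ℤ, x.natAbs = n → y ≠ 0 → z ≠ 0 →
    x ^ 4 ≠ y ^ 4 + z ^ 2 := by
  intro n
  induction n using Nat.strong_induction_on with
  | _ n IH =>
  intro x y z hxn hy hz heq
  have hx0 : x ≠ 0 := by
    intro h
    rw [h] at heq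
    have h1 : (0:ℤ) < y ^ 4 + z ^ 2 := by positivity
    simp at heq; linarith
  -- reduce to coprime case
  by_cases hg : Int.gcd x y = 1
  swap
  · -- gcd d ≥ 2, descend
    set d : ℕ := Int.gcd x y with hd
    have hd0 : d ≠ 0 := fun h => hx0 (Int.gcd_eq_zero_iff.mp h).1
    have hd2 : 2 ≤ d := by omega
    obtain ⟨x1, hx1⟩ : (d:ℤ) ∣ x := Int.gcd_dvd_left x y
    obtain ⟨y1, hy1⟩ : (d:ℤ) ∣ y := Int.gcd_dvd_right x y
    have hdz : ((d:ℤ)^2)^2 ∣ z ^ 2 := by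
      have : ((d:ℤ)^2)^2 ∣ x ^ 4 - y ^ 4 := ⟨x1^4 - y1^4, by rw [hx1, hy1]; ring⟩
      rwa [show x ^ 4 - y ^ 4 = z ^ 2 by linarith] at this
    obtain ⟨z1, hz1⟩ : ((d:ℤ)^2) ∣ z := (Int.pow_dvd_pow_iff two_ne_zero).mp hdz
    have hdd : ((d:ℤ)^4) ≠ 0 := by positivity
    have heq1 : x1 ^ 4 = y1 ^ 4 + z1 ^ 2 := by
      apply mul_left_cancel₀ hdd
      rw [show ((d:ℤ)^4) * x1 ^ 4 = ((d:ℤ)*x1)^4 by ring, ← hx1]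
      rw [heq, hy1, hz1]; ring
    have hy10 : y1 ≠ 0 := by rintro rfl; simp at hy1; exact hy (by simpa using hy1)
    have hz10 : z1 ≠ 0 := by rintro rfl; simp at hz1; exact hz (by simpa using hz1)
    have hlt : x1.natAbs < n := by
      rw [← hxn, hx1, Int.natAbs_mul, Int.natAbs_natCast]
      have h1 : x1.natAbs ≠ 0 := by
        intro h; apply hx0
        rw [hx1, Int.natAbs_eq_zero.mp h, mul_zero]
      have h2 := Nat.mul_le_mul_right (x1.natAbs) hd2
      omega
    exact IH _ hlt x1 y1 z1 rfl hy10 hz10 heq1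
  -- coprime case
  have hxy : IsCoprime x y := Int.isCoprime_iff_gcd_eq_one.mpr hg
  -- y^4 coprime to z^2
  have hyz4 : IsCoprime (y ^ 4) (z ^ 2) := by
    have h0 : IsCoprime (y ^ 4) (x ^ 4) := (hxy.symm).pow
    have h1 := h0.add_mul_left_right (-1)
    rwa [show x ^ 4 + y ^ 4 * (-1) = z ^ 2 by linarith] at h1
  have hyz : IsCoprime (y ^ 2) z := by
    have h1 : IsCoprime ((y ^ 2) ^ 2) (z ^ 2) := by
      rwa [show ((y:ℤ) ^ 2) ^ 2 = y ^ 4 by ring]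
    have h2 := (IsCoprime.pow_left_iff (by norm_num : 0 < 2)).mp h1
    exact (IsCoprime.pow_right_iff (by norm_num : 0 < 2)).mp h2
  have hx2pos : (0:ℤ) < x ^ 2 := by positivity
  -- x must be odd
  have hxodd : x % 2 = 1 := by
    rcases Int.emod_two_eq x with h | h
    · exfalso
      -- y must be odd since gcd = 1
      have hyodd : y % 2 = 1 := by
        rcases Int.emod_two_eq y with h' | h'
        · exfalso
          have h2x : (2:ℤ) ∣ x := Int.dvd_of_emod_eq_zero h
          have h2y : (2:ℤ) ∣ y := Int.dvd_of_emod_eq_zero h'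
          have := Int.dvd_gcd h2x h2y
          rw [hg] at this
          norm_num at this
        · exact h'
      obtain ⟨k, hk⟩ := Int.even_iff.mpr h
      obtain ⟨l, hl⟩ := Int.odd_iff.mpr hyodd
      have hmod : ∀ K L C : ZMod 4, (K + K) ^ 4 ≠ (2 * L + 1) ^ 4 + C ^ 2 := by decide
      apply hmod (k : ZMod 4) (l : ZMod 4) (z : ZMod 4)
      have hc := congrArg (fun t : ℤ => (t : ZMod 4)) heq
      push_cast at hc
      rw [hk, hl] at hc
      push_cast at hc
      convert hc using 2
    · exact h
  rcases Int.emod_two_eq y with hy2 | hy2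
  · -- Case B : y even, z odd
    have hzodd : z % 2 = 1 := by
      rcases Int.emod_two_eq z with h | h
      · exfalso
        have h2x : (2:ℤ) ∣ x ^ 4 := by
          have h2z : (2:ℤ) ∣ z := Int.dvd_of_emod_eq_zero h
          have h2y : (2:ℤ) ∣ y := Int.dvd_of_emod_eq_zero hy2
          rw [heq]
          exact dvd_add (dvd_pow h2y (by norm_num)) (dvd_pow h2z (by norm_num))
        have h2x' : (2:ℤ) ∣ x := Int.Prime.dvd_pow' Nat.prime_two h2x
        obtain ⟨c, hc⟩ := h2x'
        omega
      · exact h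
    have ht : PythagoreanTriple z (y ^ 2) (x ^ 2) := by
      delta PythagoreanTriple; linear_combination -heq
    have hgcd : Int.gcd z (y ^ 2) = 1 := by
      rw [Int.gcd_comm]; exact Int.isCoprime_iff_gcd_eq_one.mp hyz
    obtain ⟨m, n', h1, h2, h3, hmn, hpar, hm⟩ := ht.coprime_classification' hgcd hzodd hx2pos
    have hy2pos : (0:ℤ) < y ^ 2 := by positivity
    have hmpos : 0 < m := by
      rcases lt_or_eq_of_le hm with h | h
      · exact h
      · exact absurd hy2pos (by rw [h2, ← h]; simp)
    have hnpos : 0 < n' := by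
      have hp : 0 < 2 * m * n' := by rw [← h2]; exact hy2pos
      rcases mul_pos_iff.mp hp with ⟨_, h⟩ | ⟨h, _⟩
      · exact h
      · linarith
    obtain ⟨y0, hy0⟩ := Int.even_iff.mpr hy2
    have hyy : 2 * y0 ^ 2 = m * n' := by
      apply mul_left_cancel₀ (two_ne_zero (α := ℤ))
      have : y ^ 2 = (2 * m) * n' := by linear_combination h2
      rw [hy0] at this
      linear_combination this
    have hxA0 : ((x.natAbs : ℤ)) ≠ 0 := by
      simpa using hx0
    have hxApos : (0:ℤ) < (x.natAbs : ℤ) := lt_of_le_of_ne (by positivity) (Ne.symm hxA0)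
    rcases hpar with ⟨hme, hno⟩ | ⟨hmo, hne⟩
    · -- m even, n' odd
      obtain ⟨m0, hm0⟩ := Int.even_iff.mpr hme
      replace hm0 : m = 2 * m0 := by omega
      have hm0pos : 0 < m0 := by omega
      have hyy2 : m0 * n' = y0 ^ 2 := by
        apply mul_left_cancel₀ (two_ne_zero (α := ℤ))
        rw [hm0] at hyy
        linear_combination -hyy
      have hcop0 : Int.gcd m0 n' = 1 := by
        apply Int.isCoprime_iff_gcd_eq_one.mp
        have := Int.isCoprime_iff_gcd_eq_one.mpr hmn
        rw [hm0] at this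
        exact IsCoprime.of_mul_left_right this
      obtain ⟨i, hi⟩ := Int.sq_of_gcd_eq_one hcop0 hyy2
      replace hi : m0 = i ^ 2 := by
        rcases hi with h | h
        · exact h
        · exfalso; nlinarith [sq_nonneg i]
      obtain ⟨d, hdd⟩ := Int.sq_of_gcd_eq_one (Int.gcd_comm m0 n' ▸ hcop0)
        (by linear_combination hyy2 : n' * m0 = y0 ^ 2)
      replace hdd : n' = d ^ 2 := by
        rcases hdd with h | h
        · exact h
        · exfalso; nlinarith [sq_nonneg d]
      have hi0 : i ≠ 0 := by
        intro h; rw [h] at hi; simp at hi; omega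
      have hd0 : d ≠ 0 := by
        intro h; rw [h] at hdd; simp at hdd; omega
      have hO2 : d ^ 2 % 2 = 1 := by rw [← hdd]; exact hno
      have hcop2 : Int.gcd (d ^ 2) (2 * i ^ 2) = 1 := by
        rw [← hdd, ← show m = 2 * i ^ 2 by rw [hm0, hi], Int.gcd_comm]
        exact hmn
      have heq2 : (d ^ 2) ^ 2 + (2 * i ^ 2) ^ 2 = ((x.natAbs : ℤ)) ^ 2 := by
        rw [cast2, ← hdd, ← show m = 2 * i ^ 2 by rw [hm0, hi]]
        linear_combination -h3
      obtain ⟨r, s, hs0, hrs, hlt⟩ := desc _ _ _ hO2 hcop2 hi0 hxApos heq2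
      rw [Int.natAbs_natCast, hxn] at hlt
      apply IH _ hlt ((r.natAbs : ℤ)) s d rfl hs0 hd0
      rw [cast4]
      linear_combination -hrs
    · -- m odd, n' even
      obtain ⟨n0, hn0⟩ := Int.even_iff.mpr hne
      replace hn0 : n' = 2 * n0 := by omega
      have hn0pos : 0 < n0 := by omega
      have hyy2 : m * n0 = y0 ^ 2 := by
        apply mul_left_cancel₀ (two_ne_zero (α := ℤ))
        rw [hn0] at hyy
        linear_combination -hyy
      have hcop0 : Int.gcd m n0 = 1 := by
        apply Int.isCoprime_iff_gcd_eq_one.mp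
        have := Int.isCoprime_iff_gcd_eq_one.mpr hmn
        rw [hn0] at this
        exact IsCoprime.of_mul_right_right this
      obtain ⟨i, hi⟩ := Int.sq_of_gcd_eq_one hcop0 hyy2
      replace hi : m = i ^ 2 := by
        rcases hi with h | h
        · exact h
        · exfalso; nlinarith [sq_nonneg i]
      obtain ⟨d, hdd⟩ := Int.sq_of_gcd_eq_one (Int.gcd_comm m n0 ▸ hcop0)
        (by linear_combination hyy2 : n0 * m = y0 ^ 2)
      replace hdd : n0 = d ^ 2 := by
        rcases hdd with h | h
        · exact h
        · exfalso; nlinarith [sq_nonneg d]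
      have hi0 : i ≠ 0 := by
        intro h; rw [h] at hi; simp at hi; omega
      have hd0 : d ≠ 0 := by
        intro h; rw [h] at hdd; simp at hdd; omega
      have hO2 : i ^ 2 % 2 = 1 := by rw [← hi]; exact hmo
      have hcop2 : Int.gcd (i ^ 2) (2 * d ^ 2) = 1 := by
        rw [← hi, ← show n' = 2 * d ^ 2 by rw [hn0, hdd]]
        exact hmn
      have heq2 : (i ^ 2) ^ 2 + (2 * d ^ 2) ^ 2 = ((x.natAbs : ℤ)) ^ 2 := by
        rw [cast2, ← hi, ← show n' = 2 * d ^ 2 by rw [hn0, hdd]]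
        linear_combination -h3
      obtain ⟨r, s, hs0, hrs, hlt⟩ := desc _ _ _ hO2 hcop2 hd0 hxApos heq2
      rw [Int.natAbs_natCast, hxn] at hlt
      apply IH _ hlt ((r.natAbs : ℤ)) s i rfl hs0 hi0
      rw [cast4]
      linear_combination -hrs
  · -- Case A : y odd
    have hy2sq : y ^ 2 % 2 = 1 := by rw [sq, Int.mul_emod, hy2]; rfl
    have ht : PythagoreanTriple (y ^ 2) z (x ^ 2) := by
      delta PythagoreanTriple; linear_combination -heq
    have hgcd : Int.gcd (y ^ 2) z = 1 := Int.isCoprime_iff_gcd_eq_one.mp hyz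
    obtain ⟨m, n', h1, h2, h3, hmn, hpar, hm⟩ := ht.coprime_classification' hgcd hy2sq hx2pos
    have hn0 : n' ≠ 0 := by
      rintro rfl
      rw [mul_zero] at h2
      exact hz h2
    have heq2 : m ^ 4 = n' ^ 4 + (x * y) ^ 2 := by linear_combination -(m^2 + n'^2) * h1 - y^2 * h3
    have hxy0 : x * y ≠ 0 := mul_ne_zero hx0 hy
    have hlt : m.natAbs < n := by
      rw [← hxn]
      apply natAbs_lt_of_sq_lt
      have hn2 : 0 < n' ^ 2 := by positivity
      nlinarith [h3]
    apply IH _ hlt ((m.natAbs : ℤ)) n' (x * y) rfl hn0 hxy0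
    rw [cast4]
    exact heq2


theorem no_flt42 (x y z : ℤ) (hy : y ≠ 0) (hz : z ≠ 0) : x ^ 4 ≠ y ^ 4 + z ^ 2 :=
  no_flt42sub x.natAbs x y z rfl hy hz

theorem eight_pow_ne_sq (a c : ℕ) (ha : 0 < a) : 8 * a ^ 4 ≠ c * c := by
  intro h
  have hc : c ≠ 0 := by
    intro h0; rw [h0] at h; simp at h; omega
  have ha' : a ≠ 0 := ha.ne'
  have h1 := congrArg (fun t => t.factorization 2) h
  simp only [Nat.factorization_mul (by norm_num : (8:ℕ) ≠ 0) (pow_ne_zero 4 ha'),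
    Nat.factorization_mul hc hc, Nat.factorization_pow, Finsupp.add_apply,
    Finsupp.smul_apply, smul_eq_mul] at h1
  have h8 : (8:ℕ).factorization 2 = 3 := by
    rw [show (8:ℕ) = 2 ^ 3 by norm_num, Nat.Prime.factorization_pow Nat.prime_two]
    simp
  rw [h8] at h1
  omega

theorem stmt_16 (a b : ℕ) (ha : 0 < a) (hb : 0 < b) :
    ¬ IsSquare (a ^ 4 + 6 * a ^ 2 * b ^ 2 + b ^ 4) := by
  rintro ⟨c, hc⟩
  by_cases hab : a = b
  · subst hab
    apply eight_pow_ne_sq a c ha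
    rw [← hc]; ring
  · -- use x = a^2+b^2, y = 2ab, z = c*(a^2-b^2) over ℤ
    have hcz : (a:ℤ) ^ 4 + 6 * (a:ℤ) ^ 2 * (b:ℤ) ^ 2 + (b:ℤ) ^ 4 = (c:ℤ) * (c:ℤ) := by
      exact_mod_cast congrArg (fun t : ℕ => (t : ℤ)) hc
    apply no_flt42 ((a:ℤ)^2 + (b:ℤ)^2) (2 * a * b) ((c:ℤ) * ((a:ℤ)^2 - (b:ℤ)^2))
    · positivity
    · apply mul_ne_zero
      · intro h0
        rw [h0] at hcz
        have h1 : (0:ℤ) < (a:ℤ) ^ 4 + 6 * (a:ℤ) ^ 2 * (b:ℤ) ^ 2 + (b:ℤ) ^ 4 := by positivity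
        simp at hcz; linarith
      · intro h0
        have : (a:ℤ) ^ 2 = (b:ℤ) ^ 2 := by linarith [sub_eq_zero.mp h0]
        have : (a:ℤ) = (b:ℤ) := by nlinarith
        exact hab (by exact_mod_cast this)
    · linear_combination ((a:ℤ)^2 - (b:ℤ)^2)^2 * hcz
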